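/- Fix integers t ≥ 2, k ≥ 1 and q ≥ 1, and let H_{t,k,q} be the labelled multihypergraph on a vertex set V with |V| = t whose edge family consists of k + q copies of the full hyperedge V. Then H_{t,k,q} is k-weakly-partition-connected, its excess is ρ(H_{t,k,q}) = (k+q)(t−1) > k(t−1), and H_{t,k,q} has no k-distinguishable tree assignment. -/

import Mathlib

open scoped Classical
noncomputable section

variable {W : Type*}

/-- `A` is the edge set of a tree with vertex set `e`: no loops, all endpoints in `e`,
acyclic, and any two vertices of `e` are connected. -/
def IsTreeOn (e : Finset W) (A : Finset (Sym2 W)) : Prop :=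
  (∀ s ∈ A, ¬ s.IsDiag) ∧
  (∀ s ∈ A, ∀ v ∈ s, v ∈ e) ∧
  (SimpleGraph.fromEdgeSet (A : Set (Sym2 W))).IsAcyclic ∧
  (∀ x ∈ e, ∀ y ∈ e, (SimpleGraph.fromEdgeSet (A : Set (Sym2 W))).Reachable x y)

/-- Number of blocks of the partition `P` that meet `e`. -/
def pblocks [DecidableEq W] {U : Finset W} (P : Finpartition U) (e : Finset W) : ℕ :=
  (P.parts.filter fun B => (B ∩ e).Nonempty).card

/-- Number of edges in `A` whose two endpoints lie in distinct blocks of `P`. -/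
def crossEdges [DecidableEq W] {U : Finset W} (P : Finpartition U) (A : Finset (Sym2 W)) : ℕ :=
  (A.filter fun s => ∀ B ∈ P.parts, ¬ (∀ v ∈ s, v ∈ B)).card

/-- `k`-weak partition connectivity of the multihypergraph with vertex set `U`
and hyperedge family `E`. -/
def WeaklyPC [DecidableEq W] {ι : Type*} [Fintype ι] (U : Finset W)
    (E : ι → Finset W) (k : ℕ) : Prop :=
  ∀ P : Finpartition U, k * (P.parts.card - 1) ≤ ∑ i, (pblocks P (E i) - 1)

/-- The labelled edge set of the tree assignment `F`: each graph edge is tagged by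
the hyperedge occurrence producing it. -/
def LEdges [DecidableEq W] {ι : Type*} [Fintype ι] [DecidableEq ι]
    (F : ι → Finset (Sym2 W)) : Finset (ι × Sym2 W) :=
  Finset.univ.biUnion fun i => (F i).image fun s => (i, s)

/-- An (ordered) `k`-tree decomposition of the labelled union of the tree assignment `F`:
each labelled edge gets a layer, and the labelled edges of each layer are (bijectively)
the edge set of a spanning tree of `U`. -/
structure KTreeDecomp [DecidableEq W] {ι : Type*} [Fintype ι] [DecidableEq ι]
    (U : Finset W) (F : ι → Finset (Sym2 W)) (k : ℕ) where
  layer : ι × Sym2 W → Fin k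
  tree : Fin k → Finset (Sym2 W)
  tree_isTree : ∀ j, IsTreeOn U (tree j)
  tree_eq : ∀ j, tree j = ((LEdges F).filter fun p => layer p = j).image Prod.snd
  layer_inj : ∀ p ∈ LEdges F, ∀ q ∈ LEdges F, layer p = layer q → p.2 = q.2 → p = q

/-- The signature of a `k`-tree decomposition: `sig D e = ∑ i, i • |E(T_i) ∩ E(F_e)|`. -/
def sig [DecidableEq W] {ι : Type*} [Fintype ι] [DecidableEq ι] {U : Finset W}
    {F : ι → Finset (Sym2 W)} {k : ℕ} (D : KTreeDecomp U F k) (i : ι) : ℕ :=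
  ∑ j : Fin k, j.1 * ((F i).filter fun s => D.layer (i, s) = j).card

/-- `H = (U, E)` has a `k`-distinguishable tree assignment. -/
def Distinguishable [DecidableEq W] {ι : Type*} [Fintype ι] [DecidableEq ι]
    (U : Finset W) (E : ι → Finset W) (k : ℕ) : Prop :=
  ∃ F : ι → Finset (Sym2 W), (∀ i, IsTreeOn (E i) (F i)) ∧
    ∃ D : KTreeDecomp U F k, ∀ D' : KTreeDecomp U F k,
      (∀ i, sig D' i = sig D i) → ∀ p ∈ LEdges F, D'.layer p = D.layer p

/-- The star on `e` centered at `c`. -/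
def starOn [DecidableEq W] (e : Finset W) (c : W) : Finset (Sym2 W) :=
  (e.erase c).image fun u => s(c, u)


/-- A tree on all of a finite type has `card V - 1` edges. -/
lemma card_of_isTreeOn_univ {V : Type*} [Fintype V] [DecidableEq V]
    (hcard : 2 ≤ Fintype.card V) (A : Finset (Sym2 V))
    (h : IsTreeOn (Finset.univ : Finset V) A) : A.card + 1 = Fintype.card V := by
  obtain ⟨hdiag, _, hacyc, hreach⟩ := h
  have hne : Nonempty V := Fintype.card_pos_iff.mp (by omega)
  set G := SimpleGraph.fromEdgeSet (A : Set (Sym2 V)) with hG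
  have hconn : G.Connected := by
    rw [SimpleGraph.connected_iff]
    exact ⟨fun x y => hreach x (Finset.mem_univ x) y (Finset.mem_univ y), hne⟩
  have htree : G.IsTree := ⟨hconn, hacyc⟩
  have hedge : G.edgeFinset = A := by
    ext s
    simp only [SimpleGraph.mem_edgeFinset, hG, SimpleGraph.edgeSet_fromEdgeSet,
      Set.mem_diff, Finset.mem_coe, Set.mem_setOf_eq]
    exact ⟨fun ⟨h1, _⟩ => h1, fun h1 => ⟨h1, hdiag s h1⟩⟩
  have := htree.card_edgeFinset
  rwa [hedge] at this

/-- For `t ≥ 2`, `k ≥ 1`, `q ≥ 1`, the multihypergraph `H_{t,k,q}` on a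
`t`-element vertex set consisting of `k + q` copies of the full hyperedge `V` is
`k`-weakly-partition-connected, has excess `(k+q)(t-1) > k(t-1)`, and has no
`k`-distinguishable tree assignment. -/
theorem stmt3 {V : Type*} [Fintype V] [DecidableEq V] (t k q : ℕ)
    (hV : Fintype.card V = t) (ht : 2 ≤ t) (hk : 1 ≤ k) (hq : 1 ≤ q) :
    WeaklyPC (Finset.univ : Finset V)
        (fun _ : Fin (k + q) => (Finset.univ : Finset V)) k ∧
    (∑ _i : Fin (k + q), ((Finset.univ : Finset V).card - 1) = (k + q) * (t - 1)) ∧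
    k * (t - 1) < (k + q) * (t - 1) ∧
    ¬ Distinguishable (Finset.univ : Finset V)
        (fun _ : Fin (k + q) => (Finset.univ : Finset V)) k := by
  classical
  have hnonempty : Nonempty V := Fintype.card_pos_iff.mp (by omega)
  have hcard2 : 2 ≤ Fintype.card V := by omega
  refine ⟨?_, ?_, ?_, ?_⟩
  · -- WeaklyPC
    intro P
    have hpb : pblocks P (Finset.univ : Finset V) = P.parts.card := by
      unfold pblocks
      rw [Finset.filter_true_of_mem]
      intro B hB
      rw [Finset.inter_univ]
      exact P.nonempty_of_mem_parts hB
    simp only [hpb]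
    rw [Finset.sum_const, Finset.card_univ, Fintype.card_fin, smul_eq_mul]
    exact Nat.mul_le_mul_right _ (by omega)
  · rw [Finset.sum_const, Finset.card_univ, Fintype.card_fin, smul_eq_mul,
      Finset.card_univ, hV]
  · have h1 : 1 ≤ t - 1 := by omega
    exact Nat.mul_lt_mul_of_lt_of_le (by omega) le_rfl h1
  · rintro ⟨F, hF, D, -⟩
    -- each F i is a tree on univ, so has t - 1 edges
    have hFcard : ∀ i, (F i).card + 1 = t := fun i => by
      rw [← hV]; exact card_of_isTreeOn_univ hcard2 _ (hF i)
    -- card of LEdges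
    have hLE : (LEdges F).card = (k + q) * (t - 1) := by
      unfold LEdges
      rw [Finset.card_biUnion]
      · have : ∀ i : Fin (k + q), ((F i).image fun s => (i, s)).card = t - 1 := by
          intro i
          rw [Finset.card_image_of_injective _ (fun a b hab => by
            simpa using congrArg Prod.snd hab)]
          have := hFcard i; omega
        rw [Finset.sum_congr rfl fun i _ => this i, Finset.sum_const,
          Finset.card_univ, Fintype.card_fin, smul_eq_mul]
      · intro i _ j _ hij
        simp only [Function.onFun]
        rw [Finset.disjoint_left]
        rintro ⟨a, s⟩ ha hb
        simp only [Finset.mem_image] at ha hb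
        obtain ⟨_, _, h1⟩ := ha
        obtain ⟨_, _, h2⟩ := hb
        exact hij ((congrArg Prod.fst h1).trans (congrArg Prod.fst h2).symm)
    -- card of LEdges via fibers
    have hfib : (LEdges F).card = ∑ j : Fin k, (((LEdges F).filter
        fun p => D.layer p = j)).card :=
      Finset.card_eq_sum_card_fiberwise (fun p _ => Finset.mem_univ (D.layer p))
    have htreecard : ∀ j : Fin k, (((LEdges F).filter fun p => D.layer p = j)).card
        = t - 1 := by
      intro j
      have hinj : Set.InjOn (Prod.snd : Fin (k + q) × Sym2 V → Sym2 V)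
          ((((LEdges F).filter fun p => D.layer p = j) : Finset (Fin (k + q) × Sym2 V)) :
            Set (Fin (k + q) × Sym2 V)) := by
        intro p hp q hq hpq
        simp only [Finset.coe_filter, Set.mem_setOf_eq] at hp hq
        exact D.layer_inj p hp.1 q hq.1 (hp.2.trans hq.2.symm) hpq
      have := Finset.card_image_of_injOn hinj
      rw [← D.tree_eq j] at this
      have h2 : (D.tree j).card + 1 = t := by
        rw [← hV]; exact card_of_isTreeOn_univ hcard2 _ (D.tree_isTree j)
      omega
    rw [hLE, Finset.sum_congr rfl fun j _ => htreecard j, Finset.sum_const,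
      Finset.card_univ, Fintype.card_fin, smul_eq_mul] at hfib
    have h1 : 1 ≤ t - 1 := by omega
    nlinarith


end
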